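/- Let p ≥ 5 be a prime. Then there exists x ∈ Z_p such that x is a quadratic non-residue modulo p, x + 1 is a quadratic non-residue modulo p, and x − 1 is a nonzero quadratic residue modulo p; that is, x ≠ 0 and x is not a square in Z_p, x + 1 ≠ 0 and x + 1 is not a square in Z_p, and x − 1 ≠ 0 and x − 1 is a square in Z_p. -/

import Mathlib

open Finset

/-- Lemma 6.8: for every prime `p ≥ 5` there exists `x ∈ ZMod p` such that `x` and
`x + 1` are quadratic non-residues and `x - 1` is a nonzero quadratic residue. -/
theorem exists_special_element (p : ℕ) (hp : p.Prime) (h5 : 5 ≤ p) :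
    ∃ x : ZMod p, x ≠ 0 ∧ ¬ IsSquare x ∧ (x + 1) ≠ 0 ∧ ¬ IsSquare (x + 1) ∧
      (x - 1) ≠ 0 ∧ IsSquare (x - 1) := by
  classical
  haveI : Fact p.Prime := ⟨hp⟩
  have hchar : ringChar (ZMod p) ≠ 2 := by
    rw [ZMod.ringChar_zmod_n]; omega
  set χ := quadraticChar (ZMod p) with hχdef
  have hne : χ ≠ 1 := quadraticChar_ne_one hchar
  have hneg1 : (-1 : ZMod p) ≠ 0 := by
    intro h
    have := neg_eq_zero.mp h
    exact one_ne_zero this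
  -- Jacobi sum identity
  have hJ : ∑ x : ZMod p, χ x * χ (1 - x) = -χ (-1) := by
    have := jacobiSum_nontrivial_inv (F := ZMod p) (R := ℤ) hne
    rwa [(quadraticChar_isQuadratic (ZMod p)).inv] at this
  have hsum1 : ∑ x : ZMod p, χ x * χ (x + 1) = -1 := by
    have hre : ∑ x : ZMod p, χ x * χ (x + 1)
        = ∑ x : ZMod p, χ (-x) * χ (-x + 1) :=
      (Fintype.sum_equiv (Equiv.neg (ZMod p)) _ _ (fun x => rfl)).symm
    have : ∑ x : ZMod p, χ (-x) * χ (-x + 1) = χ (-1) * ∑ x : ZMod p, χ x * χ (1 - x) := by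
      rw [Finset.mul_sum]
      refine Finset.sum_congr rfl fun x _ => ?_
      have h1 : (-x : ZMod p) = -1 * x := by ring
      have h2 : (-x + 1 : ZMod p) = 1 - x := by ring
      rw [h2, h1, map_mul]
      ring
    rw [hre, this, hJ]
    have := quadraticChar_sq_one (F := ZMod p) hneg1
    rw [sq] at this
    rw [← hχdef] at this
    linear_combination -this
  -- total sum
  have hsum2 : ∑ x : ZMod p, (1 - χ x) * (1 - χ (x + 1)) = (p : ℤ) - 1 := by
    have e1 : ∑ x : ZMod p, χ x = 0 := quadraticChar_sum_zero hchar
    have e2 : ∑ x : ZMod p, χ (x + 1) = 0 := by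
      exact (Fintype.sum_equiv (Equiv.addRight (1 : ZMod p)) (fun x => χ (x + 1))
        (fun x => χ x) (fun x => rfl)).trans e1
    have expand : ∀ x : ZMod p,
        (1 - χ x) * (1 - χ (x + 1)) = 1 - χ x - χ (x + 1) + χ x * χ (x + 1) := by
      intro x; ring
    simp_rw [expand]
    rw [Finset.sum_add_distrib, Finset.sum_sub_distrib, Finset.sum_sub_distrib,
      Finset.sum_const, e1, e2, hsum1]
    simp [ZMod.card]
    ring
  -- the set of consecutive nonresidue pairs
  set S : Finset (ZMod p) :=
    Finset.univ.filter
      (fun x => x ≠ 0 ∧ x + 1 ≠ 0 ∧ ¬ IsSquare x ∧ ¬ IsSquare (x + 1)) with hSdef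
  have hSne : S.Nonempty := by
    by_contra hS
    rw [Finset.not_nonempty_iff_eq_empty] at hS
    have hbound : ∑ x : ZMod p, (1 - χ x) * (1 - χ (x + 1))
        ≤ ∑ x : ZMod p, (if x = -1 then 2 else 0) := by
      refine Finset.sum_le_sum fun x _ => ?_
      by_cases hx1 : x = -1
      · subst hx1
        simp only [if_pos rfl]
        rw [neg_add_cancel]
        have : χ (0 : ZMod p) = 0 := quadraticChar_zero
        rw [this]
        rcases quadraticChar_dichotomy (F := ZMod p) hneg1 with h | h <;>
          rw [← hχdef] at h <;> rw [h] <;> norm_num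
      · rw [if_neg hx1]
        by_cases hx0 : x = 0
        · subst hx0
          have : χ (0 + 1 : ZMod p) = 1 := by
            rw [zero_add]; exact map_one χ
          rw [this]; simp
        · have hx1' : x + 1 ≠ 0 := fun h => hx1 (by linear_combination h)
          have hnotin : x ∉ S := by rw [hS]; exact Finset.notMem_empty x
          rw [hSdef, Finset.mem_filter] at hnotin
          push_neg at hnotin
          have := hnotin (Finset.mem_univ x) hx0 hx1'
          by_cases hsq : IsSquare x
          · have : χ x = 1 := (quadraticChar_one_iff_isSquare hx0).mpr hsq
            rw [this]; simp
          · have hsq2 : IsSquare (x + 1) := this hsq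
            have : χ (x + 1) = 1 := (quadraticChar_one_iff_isSquare hx1').mpr hsq2
            rw [this]; simp
    rw [hsum2, Finset.sum_ite_eq' Finset.univ (-1 : ZMod p) (fun _ => (2:ℤ))] at hbound
    simp only [Finset.mem_univ, if_pos] at hbound
    have : (5 : ℤ) ≤ (p : ℤ) := by exact_mod_cast h5
    omega
  -- take minimal element
  obtain ⟨x, hxS, hmin⟩ := S.exists_min_image (fun x => x.val) hSne
  rw [hSdef, Finset.mem_filter] at hxS
  obtain ⟨-, hx0, hx1, hxs, hxs1⟩ := hxS
  have hxne1 : x ≠ 1 := fun h => hxs (h ▸ IsSquare.one)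
  have hxm1 : x - 1 ≠ 0 := sub_ne_zero.mpr hxne1
  refine ⟨x, hx0, hxs, hx1, hxs1, hxm1, ?_⟩
  by_contra hsq
  have hmem : x - 1 ∈ S := by
    rw [hSdef, Finset.mem_filter]
    refine ⟨Finset.mem_univ _, hxm1, ?_, hsq, ?_⟩
    · rw [sub_add_cancel]; exact hx0
    · rw [sub_add_cancel]; exact hxs
  have hle := hmin _ hmem
  have hvpos : 1 ≤ x.val := by
    rcases Nat.eq_zero_or_pos x.val with h | h
    · exact absurd ((ZMod.val_eq_zero x).mp h) hx0
    · exact h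
  have hvlt : x.val < p := x.val_lt
  have hxcast : (x.val : ZMod p) = x := by haveI : NeZero p := ⟨hp.ne_zero⟩; exact (ZMod.natCast_val (R := ZMod p) x).trans (ZMod.cast_id p x)
  have hval : (x - 1).val = x.val - 1 := by
    have : x - 1 = ((x.val - 1 : ℕ) : ZMod p) := by
      rw [Nat.cast_sub hvpos, hxcast, Nat.cast_one]
    rw [this, ZMod.val_cast_of_lt (by omega)]
  omega
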